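/- For every real x ∈ (0,1], the relative toll satisfies 0 ≤ (ν(x) − x·log₂(1/x))/x < 2, where ν(x) = Σ_{d≥1} d·ε_d(x)·2^{-d}. -/

import Mathlib

noncomputable def epsBit (d : ℕ) (x : ℝ) : ℝ := ((⌊2 ^ d * x⌋ % 2 : ℤ) : ℝ)

noncomputable def nu (x : ℝ) : ℝ := ∑' d : ℕ, (d : ℝ) * epsBit d x / 2 ^ d

open Real Filter Finset

lemma eps_cases (d : ℕ) (x : ℝ) : epsBit d x = 0 ∨ epsBit d x = 1 := by
  unfold epsBit
  rcases Int.emod_two_eq ⌊2 ^ d * x⌋ with h | h <;> simp [h]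

lemma eps_nonneg (d : ℕ) (x : ℝ) : 0 ≤ epsBit d x := by
  rcases eps_cases d x with h | h <;> simp [h]

lemma eps_le_one (d : ℕ) (x : ℝ) : epsBit d x ≤ 1 := by
  rcases eps_cases d x with h | h <;> simp [h]

lemma floor_rec (x : ℝ) (n : ℕ) :
    ⌊2 ^ (n + 1) * x⌋ = 2 * ⌊2 ^ n * x⌋ + ⌊2 ^ (n + 1) * x⌋ % 2 := by
  have key : (2 : ℝ) ^ (n + 1) * x = 2 * (2 ^ n * x) := by ring
  have h1 : (2 * ⌊2 ^ n * x⌋ : ℤ) ≤ ⌊2 ^ (n + 1) * x⌋ := by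
    rw [Int.le_floor]
    push_cast
    have := Int.floor_le (2 ^ n * x)
    rw [key]; linarith
  have h2 : ⌊2 ^ (n + 1) * x⌋ < 2 * ⌊2 ^ n * x⌋ + 2 := by
    rw [Int.floor_lt]
    push_cast
    have := Int.lt_floor_add_one (2 ^ n * x)
    rw [key]; linarith
  omega

lemma partial_sum (x : ℝ) (hx0 : 0 < x) (hx1 : x < 1) (n : ℕ) :
    ∑ d ∈ Finset.range (n + 1), epsBit d x / 2 ^ d = (⌊2 ^ n * x⌋ : ℝ) / 2 ^ n := by
  induction n with
  | zero =>
    have h0 : ⌊x⌋ = 0 := Int.floor_eq_zero_iff.mpr ⟨hx0.le, hx1⟩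
    simp [epsBit, h0]
  | succ n ih =>
    rw [Finset.sum_range_succ, ih]
    have hrec := floor_rec x n
    have h2 : ((⌊2 ^ (n + 1) * x⌋ : ℤ) : ℝ)
        = 2 * ((⌊2 ^ n * x⌋ : ℤ) : ℝ) + epsBit (n + 1) x := by
      unfold epsBit
      exact_mod_cast congrArg (fun z : ℤ => (z : ℝ)) hrec
    rw [h2]
    have hne : (2 : ℝ) ^ (n + 1) ≠ 0 := by positivity
    field_simp
    ring

lemma summable_aux (c : ℝ) : Summable (fun d : ℕ => ((d : ℝ) + c) * (1 / 2) ^ d) := by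
  have h1 : Summable (fun d : ℕ => (d : ℝ) * (1 / 2) ^ d) := by
    have := summable_pow_mul_geometric_of_norm_lt_one (R := ℝ) 1 (r := 1 / 2)
      (by norm_num : ‖(1 / 2 : ℝ)‖ < 1)
    simpa using this
  have h2 : Summable (fun d : ℕ => c * ((1 / 2 : ℝ)) ^ d) :=
    (summable_geometric_of_lt_one (by norm_num) (by norm_num)).mul_left c
  simpa [add_mul] using h1.add h2

lemma summable_of_bound (f : ℕ → ℝ) (c : ℝ)
    (h : ∀ d, |f d| ≤ ((d : ℝ) + c) * (1 / 2) ^ d) : Summable f :=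
  Summable.of_norm_bounded (summable_aux c) (by simpa [Real.norm_eq_abs] using h)

lemma half_pow (d : ℕ) : ((1 : ℝ) / 2) ^ d = 1 / 2 ^ d := by
  rw [div_pow, one_pow]

noncomputable def Wfun (k : ℕ) : ℕ → ℝ := fun d =>
  if d < k then 0 else if d = k then -((1 / 2 : ℝ) ^ k) else ((d : ℝ) - k - 1) * (1 / 2) ^ d

lemma Wfun_summable (k : ℕ) : Summable (Wfun k) := by
  apply summable_of_bound _ ((k : ℝ) + 2)
  intro d
  have hp : (0 : ℝ) ≤ (1 / 2) ^ d := by positivity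
  have hd0 : (0 : ℝ) ≤ (d : ℝ) := Nat.cast_nonneg d
  have hk0 : (0 : ℝ) ≤ (k : ℝ) := Nat.cast_nonneg k
  unfold Wfun
  by_cases h1 : d < k
  · rw [if_pos h1]; simp; positivity
  · rw [if_neg h1]
    by_cases h2 : d = k
    · subst h2
      rw [if_pos rfl, abs_neg, abs_of_nonneg hp]
      nlinarith
    · rw [if_neg h2]
      have hdk : (k : ℝ) + 1 ≤ (d : ℝ) := by exact_mod_cast (by omega : k + 1 ≤ d)
      rw [abs_of_nonneg (by nlinarith)]
      nlinarith

lemma Wfun_shift (k : ℕ) (i : ℕ) :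
    Wfun k (i + (k + 1)) = ((i : ℝ) * (1 / 2) ^ i) * (1 / 2) ^ (k + 1) := by
  unfold Wfun
  rw [if_neg (by omega), if_neg (by omega)]
  push_cast
  rw [pow_add]
  ring

lemma Wfun_tsum (k : ℕ) : ∑' d : ℕ, Wfun k d = 0 := by
  have h := (Wfun_summable k).sum_add_tsum_nat_add (k + 1)
  have hsum1 : ∑ i ∈ Finset.range (k + 1), Wfun k i = -((1 / 2 : ℝ) ^ k) := by
    rw [Finset.sum_eq_single k]
    · unfold Wfun; rw [if_neg (lt_irrefl k), if_pos rfl]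
    · intro b hb hbk
      unfold Wfun
      rw [if_pos (by simp [Finset.mem_range] at hb; omega)]
    · intro hmem; exact absurd (Finset.self_mem_range_succ k) hmem
  have hsum2 : ∑' i : ℕ, Wfun k (i + (k + 1)) = (1 / 2 : ℝ) ^ k := by
    have heq : (fun i : ℕ => Wfun k (i + (k + 1)))
        = fun i : ℕ => ((i : ℝ) * (1 / 2) ^ i) * (1 / 2) ^ (k + 1) := funext (Wfun_shift k)
    rw [heq, tsum_mul_right,
      tsum_coe_mul_geometric_of_norm_lt_one (r := (1 / 2 : ℝ))
        (by norm_num : ‖(1 / 2 : ℝ)‖ < 1)]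
    rw [show (1 / 2 : ℝ) / (1 - 1 / 2) ^ 2 = 2 from by norm_num,
      show ((1 : ℝ) / 2) ^ (k + 1) = (1 / 2) ^ k * (1 / 2) from pow_succ _ _]
    ring
  rw [hsum1, hsum2] at h
  linarith

theorem relative_toll_bounds :
    ∀ x ∈ Set.Ioc (0 : ℝ) 1,
      0 ≤ (nu x - x * Real.logb 2 (1 / x)) / x ∧
      (nu x - x * Real.logb 2 (1 / x)) / x < 2 := by
  rintro x ⟨hx0, hx1⟩
  rcases eq_or_lt_of_le hx1 with rfl | hx1
  · -- x = 1
    have hnu : nu 1 = 0 := by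
      have hz : ∀ d : ℕ, (d : ℝ) * epsBit d 1 / 2 ^ d = 0 := by
        intro d
        cases d with
        | zero => simp
        | succ n =>
          have he : epsBit (n + 1) 1 = 0 := by
            unfold epsBit
            have h1 : (2 : ℝ) ^ (n + 1) * 1 = ((2 ^ (n + 1) : ℤ) : ℝ) := by push_cast; ring
            rw [h1, Int.floor_intCast]
            have hmod : (2 : ℤ) ^ (n + 1) % 2 = 0 := by
              rw [pow_succ']
              exact Int.mul_emod_right 2 (2 ^ n)
            rw [hmod]; simp
          simp [he]
      calc nu 1 = ∑' _ : ℕ, (0 : ℝ) := tsum_congr hz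
        _ = 0 := tsum_zero
    rw [hnu]
    norm_num [Real.logb_one]
  -- now 0 < x < 1
  have h2pow : ∀ d : ℕ, (0 : ℝ) < 2 ^ d := fun d => by positivity
  set L := Real.logb 2 x with hLdef
  set e : ℕ → ℝ := fun d => epsBit d x / 2 ^ d with he_def
  have hed_nonneg : ∀ d, 0 ≤ e d := fun d => div_nonneg (eps_nonneg d x) (h2pow d).le
  have hed_le : ∀ d, e d ≤ (1 / 2) ^ d := by
    intro d
    show epsBit d x / 2 ^ d ≤ (1 / 2) ^ d
    rw [half_pow]
    exact div_le_div_of_nonneg_right (eps_le_one d x) (h2pow d).le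
  have habs_e : ∀ d, |e d| ≤ (1 / 2) ^ d := fun d => by
    rw [abs_of_nonneg (hed_nonneg d)]; exact hed_le d
  have hhalf_nonneg : ∀ d : ℕ, (0 : ℝ) ≤ (1 / 2) ^ d := fun d => by positivity
  have hesum : Summable e := by
    apply summable_of_bound e 1
    intro d
    have h1 := habs_e d
    have h2 := hhalf_nonneg d
    have hd0 : (0 : ℝ) ≤ (d : ℝ) := Nat.cast_nonneg d
    nlinarith
  -- HasSum e x
  have hhs : HasSum e x := by
    rw [hesum.hasSum_iff_tendsto_nat]
    have htend : Tendsto (fun n : ℕ => (⌊2 ^ n * x⌋ : ℝ) / 2 ^ n) atTop (nhds x) := by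
      have hlow : Tendsto (fun n : ℕ => x - (1 / 2) ^ n) atTop (nhds x) := by
        have := (tendsto_const_nhds : Tendsto (fun _ : ℕ => x) atTop (nhds x)).sub
          (tendsto_pow_atTop_nhds_zero_of_lt_one (by norm_num : (0:ℝ) ≤ 1/2) (by norm_num))
        simpa using this
      apply tendsto_of_tendsto_of_tendsto_of_le_of_le hlow tendsto_const_nhds
      · intro n
        show x - (1 / 2) ^ n ≤ (⌊2 ^ n * x⌋ : ℝ) / 2 ^ n
        have hf := Int.sub_one_lt_floor (2 ^ n * x)
        rw [half_pow, sub_le_iff_le_add, ← add_div, le_div_iff₀ (h2pow n)]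
        nlinarith [hf]
      · intro n
        show (⌊2 ^ n * x⌋ : ℝ) / 2 ^ n ≤ x
        rw [div_le_iff₀ (h2pow n)]
        have := Int.floor_le (2 ^ n * x)
        nlinarith [this]
    refine (tendsto_add_atTop_iff_nat 1).mp ?_
    refine htend.congr fun n => ?_
    exact (partial_sum x hx0 hx1 n).symm
  have hx_eq : ∑' d, e d = x := hhs.tsum_eq
  -- key facts about bits equal to one
  have key1 : ∀ d, epsBit d x = 1 → (1 : ℝ) ≤ 2 ^ d * x := by
    intro d hd
    have hm : ⌊2 ^ d * x⌋ % 2 = 1 := by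
      unfold epsBit at hd; exact_mod_cast hd
    have hnn : 0 ≤ ⌊2 ^ d * x⌋ := Int.floor_nonneg.mpr (by positivity)
    have hfl : (1 : ℤ) ≤ ⌊2 ^ d * x⌋ := by omega
    calc (1 : ℝ) = ((1 : ℤ) : ℝ) := by norm_num
      _ ≤ ((⌊2 ^ d * x⌋ : ℤ) : ℝ) := by exact_mod_cast hfl
      _ ≤ 2 ^ d * x := Int.floor_le _
  have key2 : ∀ d, epsBit d x = 1 → 0 ≤ (d : ℝ) + L := by
    intro d hd
    have h' : (2 : ℝ) ^ (-(d : ℝ)) ≤ x := by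
      rw [Real.rpow_neg (by norm_num : (0:ℝ) ≤ 2), Real.rpow_natCast, ← one_div,
        div_le_iff₀ (h2pow d)]
      have := key1 d hd
      linarith [mul_comm ((2:ℝ) ^ d) x]
    have := (Real.le_logb_iff_rpow_le one_lt_two hx0).mpr h'
    rw [hLdef]; linarith
  -- existence of a one bit
  have hexists : ∃ d, epsBit d x = 1 := by
    by_contra hcon
    push_neg at hcon
    have hz : ∀ d, e d = 0 := by
      intro d
      rcases eps_cases d x with h | h
      · show epsBit d x / 2 ^ d = 0
        rw [h, zero_div]
      · exact absurd h (hcon d)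
    have h0 : HasSum e 0 := by
      rw [show e = fun _ => (0 : ℝ) from funext hz]
      exact hasSum_zero
    have : x = 0 := hhs.unique h0
    linarith
  set k := Nat.find hexists with hkdef
  have hk1 : epsBit k x = 1 := Nat.find_spec hexists
  have hkmin : ∀ d < k, epsBit d x = 0 := by
    intro d hd
    rcases eps_cases d x with h | h
    · exact h
    · exact absurd h (Nat.find_min hexists hd)
  -- floor at k equals one
  have hfloor_k : ((⌊2 ^ k * x⌋ : ℤ) : ℝ) = 1 := by
    have hps := partial_sum x hx0 hx1 k
    have hsum : ∑ d ∈ Finset.range (k + 1), epsBit d x / 2 ^ d = 1 / 2 ^ k := by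
      rw [Finset.sum_eq_single k]
      · rw [hk1]
      · intro b hb hbk
        rw [hkmin b (by simp [Finset.mem_range] at hb; omega)]
        simp
      · intro hmem; exact absurd (Finset.self_mem_range_succ k) hmem
    rw [hsum] at hps
    have := h2pow k
    field_simp at hps
    linarith
  have hxlt : x < 2 / 2 ^ k := by
    have hlt := Int.lt_floor_add_one (2 ^ k * x)
    rw [hfloor_k] at hlt
    rw [lt_div_iff₀ (h2pow k)]
    linarith [mul_comm ((2:ℝ) ^ k) x]
  have hLlt : L < 1 - (k : ℝ) := by
    rw [hLdef]
    apply (Real.logb_lt_iff_lt_rpow one_lt_two hx0).mpr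
    rw [show ((1 : ℝ) - (k : ℝ)) = (1 : ℝ) - ((k : ℕ) : ℝ) from rfl,
      Real.rpow_sub (by norm_num : (0:ℝ) < 2), Real.rpow_one, Real.rpow_natCast]
    exact hxlt
  -- the series T and U
  set T : ℕ → ℝ := fun d => e d * ((d : ℝ) + L - 2) with hTdef
  set U : ℕ → ℝ := fun d => e d * ((d : ℝ) - (k : ℝ) - 1) with hUdef
  have hTsummable : Summable T := by
    apply summable_of_bound T (|L| + 2)
    intro d
    have hd0 : (0 : ℝ) ≤ (d : ℝ) := Nat.cast_nonneg d
    have h1 := habs_e d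
    have h2 : |(d : ℝ) + L - 2| ≤ (d : ℝ) + (|L| + 2) := by
      have := le_abs_self L
      have := neg_abs_le L
      rw [abs_le]; constructor <;> linarith
    calc |T d| = |e d| * |(d : ℝ) + L - 2| := abs_mul _ _
      _ ≤ (1 / 2) ^ d * ((d : ℝ) + (|L| + 2)) :=
          mul_le_mul h1 h2 (abs_nonneg _) (hhalf_nonneg d)
      _ = ((d : ℝ) + (|L| + 2)) * (1 / 2) ^ d := mul_comm _ _
  have hUsummable : Summable U := by
    apply summable_of_bound U ((k : ℝ) + 1)
    intro d
    have hd0 : (0 : ℝ) ≤ (d : ℝ) := Nat.cast_nonneg d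
    have hk0 : (0 : ℝ) ≤ (k : ℝ) := Nat.cast_nonneg k
    have h1 := habs_e d
    have h2 : |(d : ℝ) - (k : ℝ) - 1| ≤ (d : ℝ) + ((k : ℝ) + 1) := by
      rw [abs_le]; constructor <;> linarith
    calc |U d| = |e d| * |(d : ℝ) - (k : ℝ) - 1| := abs_mul _ _
      _ ≤ (1 / 2) ^ d * ((d : ℝ) + ((k : ℝ) + 1)) :=
          mul_le_mul h1 h2 (abs_nonneg _) (hhalf_nonneg d)
      _ = ((d : ℝ) + ((k : ℝ) + 1)) * (1 / 2) ^ d := mul_comm _ _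
  have hek : e k = 1 / 2 ^ k := by
    show epsBit k x / 2 ^ k = 1 / 2 ^ k
    rw [hk1]
  have hTU : ∀ d, T d ≤ U d := by
    intro d
    show e d * ((d : ℝ) + L - 2) ≤ e d * ((d : ℝ) - (k : ℝ) - 1)
    apply mul_le_mul_of_nonneg_left _ (hed_nonneg d)
    linarith
  have hTUk : T k < U k := by
    show e k * ((k : ℝ) + L - 2) < e k * ((k : ℝ) - (k : ℝ) - 1)
    apply mul_lt_mul_of_pos_left _ (by rw [hek]; positivity)
    linarith
  have hUW : ∀ d, U d ≤ Wfun k d := by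
    intro d
    rcases lt_trichotomy d k with h | h | h
    · have h0 : e d = 0 := by
        show epsBit d x / 2 ^ d = 0
        rw [hkmin d h, zero_div]
      show e d * ((d : ℝ) - (k : ℝ) - 1) ≤ Wfun k d
      rw [h0, zero_mul]
      unfold Wfun
      rw [if_pos h]
    · rw [h]
      show e k * ((k : ℝ) - (k : ℝ) - 1) ≤ Wfun k k
      have hw : Wfun k k = -((1 / 2 : ℝ) ^ k) := by
        unfold Wfun; rw [if_neg (lt_irrefl k), if_pos rfl]
      rw [hw, hek, half_pow]
      have heq2 : (1 : ℝ) / 2 ^ k * ((k : ℝ) - (k : ℝ) - 1) = -(1 / 2 ^ k) := by ring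
      rw [heq2]
    · have hdk : (k : ℝ) + 1 ≤ (d : ℝ) := by exact_mod_cast (by omega : k + 1 ≤ d)
      have hw : Wfun k d = ((d : ℝ) - (k : ℝ) - 1) * (1 / 2) ^ d := by
        unfold Wfun; rw [if_neg (by omega), if_neg (by omega)]
      show e d * ((d : ℝ) - (k : ℝ) - 1) ≤ Wfun k d
      rw [hw]
      calc e d * ((d : ℝ) - (k : ℝ) - 1)
          ≤ (1 / 2) ^ d * ((d : ℝ) - (k : ℝ) - 1) :=
            mul_le_mul_of_nonneg_right (hed_le d) (by linarith)
        _ = ((d : ℝ) - (k : ℝ) - 1) * (1 / 2) ^ d := mul_comm _ _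
  -- assemble the sums
  have hAsummable : Summable (fun d : ℕ => (d : ℝ) * e d) := by
    apply summable_of_bound _ 1
    intro d
    have hd0 : (0 : ℝ) ≤ (d : ℝ) := Nat.cast_nonneg d
    have h1 := habs_e d
    have h2 := hhalf_nonneg d
    rw [abs_mul, abs_of_nonneg hd0]
    nlinarith
  have hnux : nu x = ∑' d : ℕ, (d : ℝ) * e d := by
    unfold nu
    exact tsum_congr fun d => mul_div_assoc ((d : ℝ)) (epsBit d x) (2 ^ d)
  have h1 : HasSum (fun d : ℕ => (d : ℝ) * e d) (∑' d : ℕ, (d : ℝ) * e d) := hAsummable.hasSum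
  have h2 : HasSum (fun d : ℕ => e d * L) (x * L) := hhs.mul_right L
  have h3 : HasSum (fun d : ℕ => e d * 2) (x * 2) := hhs.mul_right 2
  have hF : HasSum (fun d : ℕ => e d * ((d : ℝ) + L)) (∑' d : ℕ, (d : ℝ) * e d + x * L) := by
    have hfun : (fun d : ℕ => (d : ℝ) * e d + e d * L) = fun d => e d * ((d : ℝ) + L) := by
      funext d
      show (d : ℝ) * e d + e d * L = e d * ((d : ℝ) + L)
      ring
    rw [← hfun]
    exact h1.add h2
  have hTS : HasSum T (∑' d : ℕ, (d : ℝ) * e d + x * L - x * 2) := by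
    have hfun : (fun d : ℕ => ((d : ℝ) * e d + e d * L) - e d * 2) = T := by
      funext d
      show ((d : ℝ) * e d + e d * L) - e d * 2 = e d * ((d : ℝ) + L - 2)
      ring
    rw [← hfun]
    exact (h1.add h2).sub h3
  have hlow : 0 ≤ ∑' d : ℕ, (d : ℝ) * e d + x * L := by
    rw [← hF.tsum_eq]
    apply tsum_nonneg
    intro d
    rcases eps_cases d x with h | h
    · have h0 : e d = 0 := by
        show epsBit d x / 2 ^ d = 0
        rw [h, zero_div]
      rw [h0, zero_mul]
    · exact mul_nonneg (hed_nonneg d) (key2 d h)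
  have hupp : ∑' d : ℕ, (d : ℝ) * e d + x * L - x * 2 < 0 := by
    rw [← hTS.tsum_eq]
    calc ∑' d, T d < ∑' d, U d := Summable.tsum_lt_tsum hTU hTUk hTsummable hUsummable
      _ ≤ ∑' d, Wfun k d := Summable.tsum_le_tsum hUW hUsummable (Wfun_summable k)
      _ = 0 := Wfun_tsum k
  have hlog : Real.logb 2 (1 / x) = -L := by rw [one_div, Real.logb_inv, hLdef]
  have htoll : nu x - x * Real.logb 2 (1 / x) = ∑' d : ℕ, (d : ℝ) * e d + x * L := by
    rw [hlog, hnux]; ring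
  constructor
  · apply div_nonneg _ hx0.le
    rw [htoll]
    exact hlow
  · rw [div_lt_iff₀ hx0, htoll]
    linarith
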